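/- Let n ≥ 1 and let u : ℝⁿ × (−∞,0) → ℝ be twice continuously differentiable and ℤⁿ-periodic in space. Then for all T₁ < T₂ < 0 and all α > 0, δ > 0: ∫_{T₁}^{T₂} ∫_{[0,1]ⁿ} ((α − δ^{−1})·u² + 2|∇u|²)·e^{−αt} dx dt ≤ ∫_{T₁}^{T₂} ∫_{[0,1]ⁿ} δ·(∂_t u − Δu)²·e^{−αt} dx dt + ∫_{[0,1]ⁿ} u(x,T₁)²·e^{−αT₁} dx. -/

import Mathlib

open MeasureTheory Set Function

/-- derivative along a coordinate line. -/
lemma carleman_aux_hasDerivAt_update {n : ℕ} (F : ((Fin n → ℝ) × ℝ) → ℝ) {x : Fin n → ℝ}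
    {t : ℝ} (hF : DifferentiableAt ℝ F (x, t)) (i : Fin n) :
    HasDerivAt (fun s => F (Function.update x i s, t))
      (fderiv ℝ F (x, t) (Pi.single i 1, 0)) (x i) := by
  set v : (Fin n → ℝ) × ℝ := ((Pi.single i 1 : Fin n → ℝ), (0:ℝ)) with hv
  have h1 : (fun s : ℝ => (Function.update x i s, t))
      = fun s => (x, t) + (s - x i) • v := by
    funext s
    refine Prod.ext ?_ ?_
    · funext j
      rcases eq_or_ne j i with rfl | hj
      · simp [hv]
      · simp [hv, Function.update_of_ne hj, Pi.single_eq_of_ne hj]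
    · simp [hv]
  have hgd : HasDerivAt (fun s : ℝ => (x, t) + (s - x i) • v) v (x i) := by
    simpa using (((hasDerivAt_id (x i)).sub_const (x i)).smul_const v).const_add ((x, t))
  have hfx : ((x, t) : (Fin n → ℝ) × ℝ) = (x, t) + ((x i) - x i) • v := by simp
  have hc := HasFDerivAt.comp_hasDerivAt (x i) (hfx ▸ hF.hasFDerivAt) hgd
  have : (fun s => F (Function.update x i s, t)) = F ∘ fun s => (x, t) + (s - x i) • v := by
    rw [← h1]; rfl
  rw [this]
  convert hc using 3 <;> rfl

/-- derivative along the time line. -/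
lemma carleman_aux_hasDerivAt_time {n : ℕ} (F : ((Fin n → ℝ) × ℝ) → ℝ) {x : Fin n → ℝ}
    {t : ℝ} (hF : DifferentiableAt ℝ F (x, t)) :
    HasDerivAt (fun s => F (x, s)) (fderiv ℝ F (x, t) (0, 1)) t := by
  have hgd : HasDerivAt (fun s : ℝ => ((x : Fin n → ℝ), s)) ((0 : Fin n → ℝ), (1:ℝ)) t :=
    (hasDerivAt_const t x).prodMk (hasDerivAt_id t)
  have hc := HasFDerivAt.comp_hasDerivAt t hF.hasFDerivAt hgd
  exact hc

/-- fderiv commutes with translation. -/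
lemma carleman_aux_fderiv_shift {E G : Type*} [NormedAddCommGroup E] [NormedSpace ℝ E]
    [NormedAddCommGroup G] [NormedSpace ℝ G] (f : E → G) (c x : E) :
    fderiv ℝ (fun y => f (y + c)) x = fderiv ℝ f (x + c) := by
  by_cases h : DifferentiableAt ℝ f (x + c)
  · have hg : HasFDerivAt (fun y : E => y + c) (ContinuousLinearMap.id ℝ E) x :=
      (hasFDerivAt_id x).add_const c
    have := h.hasFDerivAt.comp x hg
    simpa [Function.comp_def] using this.fderiv
  · rw [fderiv_zero_of_not_differentiableAt h, fderiv_zero_of_not_differentiableAt]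
    intro hd
    apply h
    have h2 : DifferentiableAt ℝ (fun z : E => (fun y => f (y + c)) (z - c)) (x + c) := by
      have hsub : DifferentiableAt ℝ (fun z : E => z - c) (x + c) :=
        (differentiableAt_id).sub_const c
      have := DifferentiableAt.comp (g := fun y => f (y + c)) (x + c)
        (by simpa using hd) hsub
      exact this
    simpa [sub_add_cancel] using h2

/-- periodicity of fderiv for functions invariant under translation on an open set. -/
lemma carleman_aux_fderiv_periodic {E G : Type*} [NormedAddCommGroup E] [NormedSpace ℝ E]
    [NormedAddCommGroup G] [NormedSpace ℝ G] (F : E → G) (c : E) (U : Set E) (hU : IsOpen U)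
    (hUc : ∀ y ∈ U, F (y + c) = F y) {x : E} (hx : x ∈ U) :
    fderiv ℝ F (x + c) = fderiv ℝ F x := by
  have hEq : (fun y => F (y + c)) =ᶠ[nhds x] F := by
    filter_upwards [hU.mem_nhds hx] with y hy using hUc y hy
  rw [← hEq.fderiv_eq, carleman_aux_fderiv_shift]


noncomputable def spatialPDeriv {n : ℕ} (i : Fin n) (u : (Fin n → ℝ) → ℝ → ℝ) :
    (Fin n → ℝ) → ℝ → ℝ :=
  fun x t => deriv (fun s => u (Function.update x i s) t) (x i)

noncomputable def spatialLaplacian {n : ℕ} (u : (Fin n → ℝ) → ℝ → ℝ) :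
    (Fin n → ℝ) → ℝ → ℝ :=
  fun x t => ∑ i : Fin n, spatialPDeriv i (spatialPDeriv i u) x t

noncomputable def spatialGradSq {n : ℕ} (u : (Fin n → ℝ) → ℝ → ℝ) :
    (Fin n → ℝ) → ℝ → ℝ :=
  fun x t => ∑ i : Fin n, (spatialPDeriv i u x t) ^ 2

noncomputable def timeDeriv {n : ℕ} (u : (Fin n → ℝ) → ℝ → ℝ) :
    (Fin n → ℝ) → ℝ → ℝ :=
  fun x t => deriv (fun s => u x s) t

theorem carleman_inequality (n : ℕ) (hn : 1 ≤ n)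
    (u : (Fin n → ℝ) → ℝ → ℝ)
    (hu : ContDiffOn ℝ 2 (fun q : (Fin n → ℝ) × ℝ => u q.1 q.2)
      (Set.univ ×ˢ Set.Iio 0))
    (hper : ∀ (x : Fin n → ℝ) (t : ℝ), t < 0 → ∀ z : Fin n → ℤ,
      u (x + fun i => (z i : ℝ)) t = u x t)
    (T₁ T₂ α δ : ℝ) (hT₁₂ : T₁ < T₂) (hT₂ : T₂ < 0) (hα : 0 < α) (hδ : 0 < δ) :
    (∫ t in T₁..T₂, ∫ x in Set.Icc (0 : Fin n → ℝ) 1,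
        ((α - δ⁻¹) * (u x t) ^ 2 + 2 * spatialGradSq u x t) * Real.exp (-α * t))
      ≤ (∫ t in T₁..T₂, ∫ x in Set.Icc (0 : Fin n → ℝ) 1,
          δ * (timeDeriv u x t - spatialLaplacian u x t) ^ 2 * Real.exp (-α * t))
        + ∫ x in Set.Icc (0 : Fin n → ℝ) 1, (u x T₁) ^ 2 * Real.exp (-α * T₁) := by
  obtain ⟨m, rfl⟩ : ∃ m, n = m + 1 := ⟨n - 1, by omega⟩
  set U : ((Fin (m+1) → ℝ) × ℝ) → ℝ := fun q => u q.1 q.2 with hUdef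
  set Ω : Set ((Fin (m+1) → ℝ) × ℝ) := Set.univ ×ˢ Set.Iio (0:ℝ) with hΩdef
  have hΩ : IsOpen Ω := isOpen_univ.prod isOpen_Iio
  have hmem : ∀ {q : (Fin (m+1) → ℝ) × ℝ}, q.2 < 0 → q ∈ Ω := fun h => ⟨Set.mem_univ _, h⟩
  have hU : ContDiffOn ℝ 2 U Ω := hu
  have hdU : ∀ {q : (Fin (m+1) → ℝ) × ℝ}, q.2 < 0 → DifferentiableAt ℝ U q := fun {q} hq =>
    (hU.contDiffAt (hΩ.mem_nhds (hmem hq))).differentiableAt (by norm_num)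
  have hU1 : ContDiffOn ℝ 1 (fderiv ℝ U) Ω := hU.fderiv_of_isOpen hΩ (by norm_num)
  set P : Fin (m+1) → ((Fin (m+1) → ℝ) × ℝ) → ℝ :=
    fun i q => fderiv ℝ U q (Pi.single i 1, 0) with hPdef
  set Tt : ((Fin (m+1) → ℝ) × ℝ) → ℝ := fun q => fderiv ℝ U q (0, 1) with hTtdef
  have hP1 : ∀ i, ContDiffOn ℝ 1 (P i) Ω := fun i => hU1.clm_apply contDiffOn_const
  have hdP : ∀ (i) {q : (Fin (m+1) → ℝ) × ℝ}, q.2 < 0 → DifferentiableAt ℝ (P i) q :=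
    fun i {q} hq => ((hP1 i).contDiffAt (hΩ.mem_nhds (hmem hq))).differentiableAt one_ne_zero
  set Q : Fin (m+1) → ((Fin (m+1) → ℝ) × ℝ) → ℝ :=
    fun i q => fderiv ℝ (P i) q (Pi.single i 1, 0) with hQdef
  -- continuity
  have hcU : ContinuousOn U Ω := hU.continuousOn
  have hcP : ∀ i, ContinuousOn (P i) Ω := fun i => (hP1 i).continuousOn
  have hcQ : ∀ i, ContinuousOn (Q i) Ω := fun i =>
    ((hP1 i).continuousOn_fderiv_of_isOpen hΩ le_rfl).clm_apply continuousOn_const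
  have hcT : ContinuousOn Tt Ω := hU1.continuousOn.clm_apply continuousOn_const
  -- bridges
  have e₁ : ∀ (x : Fin (m+1) → ℝ) {t : ℝ}, t < 0 → ∀ i,
      spatialPDeriv i u x t = P i (x, t) := by
    intro x t ht i
    exact (carleman_aux_hasDerivAt_update U (hdU ht) i).deriv
  have e₂ : ∀ (x : Fin (m+1) → ℝ) {t : ℝ}, t < 0 → ∀ i,
      spatialPDeriv i (spatialPDeriv i u) x t = Q i (x, t) := by
    intro x t ht i
    show deriv (fun s => spatialPDeriv i u (Function.update x i s) t) (x i) = Q i (x, t)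
    have hfun : (fun s => spatialPDeriv i u (Function.update x i s) t)
        = fun s => P i (Function.update x i s, t) := by
      funext s; exact e₁ _ ht i
    rw [hfun]
    exact (carleman_aux_hasDerivAt_update (P i) (hdP i ht) i).deriv
  have e₃ : ∀ (x : Fin (m+1) → ℝ) {t : ℝ}, t < 0 → timeDeriv u x t = Tt (x, t) := by
    intro x t ht
    exact (carleman_aux_hasDerivAt_time U (hdU ht)).deriv
  -- periodicity
  have hsingle : ∀ i : Fin (m+1),
      (fun j => (((Pi.single i (1:ℤ) : Fin (m+1) → ℤ) j : ℤ) : ℝ)) = (Pi.single i 1 : Fin (m+1) → ℝ) := by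
    intro i
    funext j
    rcases eq_or_ne j i with rfl | hj
    · simp
    · simp [Pi.single_eq_of_ne hj]
  have hUper : ∀ i : Fin (m+1), ∀ q ∈ Ω,
      U (q + ((Pi.single i 1 : Fin (m+1) → ℝ), 0)) = U q := by
    intro i q hq
    show u (q.1 + (Pi.single i 1 : Fin (m+1) → ℝ)) (q.2 + 0) = u q.1 q.2
    rw [add_zero, ← hsingle i]
    exact hper q.1 q.2 hq.2 (Pi.single i (1:ℤ))
  have hPper : ∀ (i j : Fin (m+1)) (x : Fin (m+1) → ℝ) {t : ℝ}, t < 0 →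
      P j (x + (Pi.single i 1 : Fin (m+1) → ℝ), t) = P j (x, t) := by
    intro i j x t ht
    have := carleman_aux_fderiv_periodic U ((Pi.single i 1 : Fin (m+1) → ℝ), 0) Ω hΩ
      (hUper i) (hmem (q := (x, t)) ht)
    show fderiv ℝ U (x + (Pi.single i 1 : Fin (m+1) → ℝ), t) (Pi.single j 1, 0)
        = fderiv ℝ U (x, t) (Pi.single j 1, 0)
    have heq : ((x, t) : (Fin (m+1) → ℝ) × ℝ) + ((Pi.single i 1 : Fin (m+1) → ℝ), 0)
        = (x + (Pi.single i 1 : Fin (m+1) → ℝ), t) := by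
      refine Prod.ext rfl ?_; simp
    rw [← heq, this]
  have hQper : ∀ (i : Fin (m+1)) (x : Fin (m+1) → ℝ) {t : ℝ}, t < 0 →
      Q i (x + (Pi.single i 1 : Fin (m+1) → ℝ), t) = Q i (x, t) := by
    intro i x t ht
    have hPinv : ∀ y ∈ Ω, P i (y + ((Pi.single i 1 : Fin (m+1) → ℝ), 0)) = P i y := by
      intro y hy
      have heq : y + ((Pi.single i 1 : Fin (m+1) → ℝ), (0:ℝ))
          = (y.1 + (Pi.single i 1 : Fin (m+1) → ℝ), y.2) := by
        refine Prod.ext rfl ?_; simp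
      rw [heq]
      exact hPper i i y.1 hy.2
    have := carleman_aux_fderiv_periodic (P i) ((Pi.single i 1 : Fin (m+1) → ℝ), 0) Ω hΩ
      hPinv (hmem (q := (x, t)) ht)
    show fderiv ℝ (P i) (x + (Pi.single i 1 : Fin (m+1) → ℝ), t) (Pi.single i 1, 0)
        = fderiv ℝ (P i) (x, t) (Pi.single i 1, 0)
    have heq : ((x, t) : (Fin (m+1) → ℝ) × ℝ) + ((Pi.single i 1 : Fin (m+1) → ℝ), 0)
        = (x + (Pi.single i 1 : Fin (m+1) → ℝ), t) := by
      refine Prod.ext rfl ?_; simp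
    rw [← heq, this]
  -- continuity on the slice {t} for fixed t < 0
  have hline : ∀ (t : ℝ), Continuous (fun x : Fin (m+1) → ℝ => ((x, t) : (Fin (m+1) → ℝ) × ℝ)) :=
    fun t => continuous_id.prodMk continuous_const
  have hmapsto : ∀ {t : ℝ}, t < 0 → ∀ (s : Set (Fin (m+1) → ℝ)),
      Set.MapsTo (fun x : Fin (m+1) → ℝ => ((x, t) : (Fin (m+1) → ℝ) × ℝ)) s Ω :=
    fun {t} ht s x _ => hmem ht
  -- integration by parts on the cube
  have hIBP : ∀ {t : ℝ}, t < 0 →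
      (∫ x in Set.Icc (0 : Fin (m+1) → ℝ) 1,
        (U (x, t) * (∑ j, Q j (x, t)) + ∑ j, (P j (x, t))^2)) = 0 := by
    intro t ht
    set ι : (Fin (m+1) → ℝ) →L[ℝ] ((Fin (m+1) → ℝ) × ℝ) := ContinuousLinearMap.inl ℝ _ _ with hι
    set f : (Fin (m+1) → ℝ) → (Fin (m+1) → ℝ) := fun x j => U (x, t) * P j (x, t) with hf
    set f' : (Fin (m+1) → ℝ) → (Fin (m+1) → ℝ) →L[ℝ] (Fin (m+1) → ℝ) := fun x =>
      ContinuousLinearMap.pi (fun j =>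
        U (x, t) • ((fderiv ℝ (P j) (x, t)).comp ι) + P j (x, t) • ((fderiv ℝ U (x, t)).comp ι))
      with hf'
    have hcompι : ∀ x : Fin (m+1) → ℝ,
        HasFDerivAt (fun y : Fin (m+1) → ℝ => ((y, t) : (Fin (m+1) → ℝ) × ℝ)) ι x :=
      fun x => hasFDerivAt_prodMk_left x t
    have hAU : ∀ x, HasFDerivAt (fun y => U (y, t)) ((fderiv ℝ U (x, t)).comp ι) x := fun x =>
      (((hdU (q := (x, t)) ht).hasFDerivAt).comp x (hcompι x) :)
    have hAP : ∀ j x, HasFDerivAt (fun y => P j (y, t)) ((fderiv ℝ (P j) (x, t)).comp ι) x :=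
      fun j x => (((hdP j (q := (x, t)) ht).hasFDerivAt).comp x (hcompι x) :)
    have hd : ∀ x, HasFDerivAt f (f' x) x := by
      intro x
      apply hasFDerivAt_pi''
      intro j
      have hmul := (hAU x).mul (hAP j x)
      exact hmul.congr_fderiv rfl
    have hdiv : ∀ x, (∑ j, f' x (Pi.single j 1) j)
        = U (x, t) * (∑ j, Q j (x, t)) + ∑ j, (P j (x, t))^2 := by
      intro x
      have hterm : ∀ j, f' x (Pi.single j 1) j
          = U (x, t) * Q j (x, t) + P j (x, t) * P j (x, t) := by
        intro j
        simp [hf', hι, hQdef, hPdef, ContinuousLinearMap.pi_apply]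
      rw [Finset.sum_congr rfl (fun j _ => hterm j), Finset.sum_add_distrib, ← Finset.mul_sum]
      congr 1
      exact Finset.sum_congr rfl (fun j _ => (sq (P j (x, t))).symm
        )
    have hcontdiv : ContinuousOn
        (fun x => U (x, t) * (∑ j, Q j (x, t)) + ∑ j, (P j (x, t))^2)
        (Set.Icc (0 : Fin (m+1) → ℝ) 1) := by
      have hU' : ContinuousOn (fun x : Fin (m+1) → ℝ => U (x, t))
          (Set.Icc (0 : Fin (m+1) → ℝ) 1) :=
        hcU.comp (hline t).continuousOn (hmapsto ht _)
      have hQ' : ∀ j, ContinuousOn (fun x : Fin (m+1) → ℝ => Q j (x, t))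
          (Set.Icc (0 : Fin (m+1) → ℝ) 1) :=
        fun j => (hcQ j).comp (hline t).continuousOn (hmapsto ht _)
      have hP' : ∀ j, ContinuousOn (fun x : Fin (m+1) → ℝ => P j (x, t))
          (Set.Icc (0 : Fin (m+1) → ℝ) 1) :=
        fun j => (hcP j).comp (hline t).continuousOn (hmapsto ht _)
      exact (hU'.mul (continuousOn_finset_sum _ (fun j _ => hQ' j))).add
        (continuousOn_finset_sum _ (fun j _ => (hP' j).pow 2))
    have Hc : ContinuousOn f (Set.Icc (0 : Fin (m+1) → ℝ) 1) := by
      rw [continuousOn_pi]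
      intro j
      exact (hcU.comp (hline t).continuousOn (hmapsto ht _)).mul
        ((hcP j).comp (hline t).continuousOn (hmapsto ht _))
    have Hi : IntegrableOn (fun x => ∑ j, f' x (Pi.single j 1) j)
        (Set.Icc (0 : Fin (m+1) → ℝ) 1) := by
      rw [show (fun x => ∑ j, f' x (Pi.single j 1) j)
        = fun x => U (x, t) * (∑ j, Q j (x, t)) + ∑ j, (P j (x, t))^2 from funext hdiv]
      exact hcontdiv.integrableOn_compact isCompact_Icc
    have hdt := MeasureTheory.integral_divergence_of_hasFDerivAt_off_countable (a := 0) (b := 1)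
      (fun i => zero_le_one) f f' ∅ Set.countable_empty Hc (fun x _ => hd x) Hi
    rw [show (fun x => U (x, t) * (∑ j, Q j (x, t)) + ∑ j, (P j (x, t))^2)
      = fun x => ∑ j, f' x (Pi.single j 1) j from (funext hdiv).symm]
    rw [hdt]
    apply Finset.sum_eq_zero
    intro i _
    rw [sub_eq_zero]
    have hface : ∀ y : Fin m → ℝ,
        f (i.insertNth ((1 : Fin (m+1) → ℝ) i) y) i = f (i.insertNth ((0 : Fin (m+1) → ℝ) i) y) i := by
      intro y
      have hins : (i.insertNth ((1 : Fin (m+1) → ℝ) i) y : Fin (m+1) → ℝ)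
          = (i.insertNth ((0 : Fin (m+1) → ℝ) i) y : Fin (m+1) → ℝ) + Pi.single i 1 := by
        funext j
        rcases eq_or_ne j i with rfl | hj
        · simp
        · obtain ⟨k, rfl⟩ := Fin.exists_succAbove_eq hj
          simp [Fin.insertNth_apply_succAbove, Pi.single_eq_of_ne hj]
      rw [hins, hf]
      simp only
      rw [hPper i i _ ht]
      have hU2 : U ((i.insertNth ((0 : Fin (m+1) → ℝ) i) y : Fin (m+1) → ℝ) + Pi.single i 1, t)
          = U ((i.insertNth ((0 : Fin (m+1) → ℝ) i) y : Fin (m+1) → ℝ), t) := by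
        have heq : (((i.insertNth ((0 : Fin (m+1) → ℝ) i) y : Fin (m+1) → ℝ), t)
            : (Fin (m+1) → ℝ) × ℝ) + ((Pi.single i 1 : Fin (m+1) → ℝ), 0)
            = ((i.insertNth ((0 : Fin (m+1) → ℝ) i) y : Fin (m+1) → ℝ) + Pi.single i 1, t) := by
          refine Prod.ext rfl ?_; simp
        rw [← heq]
        exact hUper i _ (hmem ht)
      rw [hU2]
    exact integral_congr_ae (Filter.EventuallyEq.of_eq (funext hface))
  -- time derivative of the weighted square
  have hgderiv : ∀ (x : Fin (m+1) → ℝ) {t : ℝ}, t < 0 →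
      HasDerivAt (fun s => (U (x, s))^2 * Real.exp (-α * s))
        ((2 * U (x, t) * Tt (x, t) - α * (U (x, t))^2) * Real.exp (-α * t)) t := by
    intro x t ht
    have h1 : HasDerivAt (fun s => U (x, s)) (Tt (x, t)) t :=
      carleman_aux_hasDerivAt_time U (hdU ht)
    have h2 : HasDerivAt (fun s => (U (x, s))^2) (2 * U (x, t) * Tt (x, t)) t := by
      have := h1.pow 2
      refine this.congr_deriv ?_
      ring
    have h3 : HasDerivAt (fun s : ℝ => Real.exp (-α * s)) (Real.exp (-α * t) * (-α)) t := by
      have h4 : HasDerivAt (fun s : ℝ => -α * s) (-α) t := by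
        simpa using (hasDerivAt_id t).const_mul (-α)
      exact h4.exp
    have := h2.mul h3
    refine this.congr_deriv ?_
    ring
  -- measures
  set ν : Measure (Fin (m+1) → ℝ) := volume.restrict (Set.Icc (0 : Fin (m+1) → ℝ) 1) with hνdef
  have hprod : (volume.restrict (Set.Ioc T₁ T₂)).prod ν
      = (volume : Measure (ℝ × (Fin (m+1) → ℝ))).restrict
        (Set.Ioc T₁ T₂ ×ˢ Set.Icc (0 : Fin (m+1) → ℝ) 1) := by
    rw [hνdef, Measure.volume_eq_prod, Measure.prod_restrict]
  have key_int : ∀ Φ : ℝ → (Fin (m+1) → ℝ) → ℝ,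
      ContinuousOn (Function.uncurry Φ) {p : ℝ × (Fin (m+1) → ℝ) | p.1 < 0} →
      Integrable (Function.uncurry Φ) ((volume.restrict (Set.Ioc T₁ T₂)).prod ν) := by
    intro Φ hΦ
    rw [hprod]
    have hcomp : IsCompact (Set.Icc T₁ T₂ ×ˢ Set.Icc (0 : Fin (m+1) → ℝ) 1) :=
      isCompact_Icc.prod isCompact_Icc
    have hsubS : (Set.Icc T₁ T₂ ×ˢ Set.Icc (0 : Fin (m+1) → ℝ) 1)
        ⊆ {p : ℝ × (Fin (m+1) → ℝ) | p.1 < 0} :=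
      fun p hp => lt_of_le_of_lt hp.1.2 hT₂
    exact ((hΦ.mono hsubS).integrableOn_compact hcomp).mono_set
      (Set.prod_mono Set.Ioc_subset_Icc_self subset_rfl)
  have compS : ∀ (G : ((Fin (m+1) → ℝ) × ℝ) → ℝ), ContinuousOn G Ω →
      ContinuousOn (fun p : ℝ × (Fin (m+1) → ℝ) => G (p.2, p.1))
        {p : ℝ × (Fin (m+1) → ℝ) | p.1 < 0} :=
    fun G hG => hG.comp continuous_swap.continuousOn (fun p hp => hmem hp)
  have cU' := compS U hcU
  have cP' : ∀ j, ContinuousOn (fun p : ℝ × (Fin (m+1) → ℝ) => P j (p.2, p.1))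
      {p : ℝ × (Fin (m+1) → ℝ) | p.1 < 0} := fun j => compS (P j) (hcP j)
  have cQ' : ∀ j, ContinuousOn (fun p : ℝ × (Fin (m+1) → ℝ) => Q j (p.2, p.1))
      {p : ℝ × (Fin (m+1) → ℝ) | p.1 < 0} := fun j => compS (Q j) (hcQ j)
  have cT' := compS Tt hcT
  have cexp : Continuous (fun p : ℝ × (Fin (m+1) → ℝ) => Real.exp (-α * p.1)) :=
    Real.continuous_exp.comp (continuous_const.mul continuous_fst)
  -- the four integrands
  set dvg : ℝ → (Fin (m+1) → ℝ) → ℝ :=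
    fun t x => U (x, t) * (∑ j, Q j (x, t)) + ∑ j, (P j (x, t))^2 with hdvg
  set Φ₁ : ℝ → (Fin (m+1) → ℝ) → ℝ :=
    fun t x => ((α - δ⁻¹) * (U (x, t))^2 + 2 * ∑ j, (P j (x, t))^2) * Real.exp (-α * t) with hΦ₁
  set Φ₂ : ℝ → (Fin (m+1) → ℝ) → ℝ :=
    fun t x => δ * (Tt (x, t) - ∑ j, Q j (x, t))^2 * Real.exp (-α * t) with hΦ₂
  set Φ₃ : ℝ → (Fin (m+1) → ℝ) → ℝ :=
    fun t x => (2 * Real.exp (-α * t)) * dvg t x with hΦ₃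
  set Φ₄ : ℝ → (Fin (m+1) → ℝ) → ℝ :=
    fun t x => (2 * U (x, t) * Tt (x, t) - α * (U (x, t))^2) * Real.exp (-α * t) with hΦ₄
  have hContΦ₁ : ContinuousOn (Function.uncurry Φ₁) {p : ℝ × (Fin (m+1) → ℝ) | p.1 < 0} := by
    have h : Function.uncurry Φ₁ = fun p : ℝ × (Fin (m+1) → ℝ) =>
        ((α - δ⁻¹) * (U (p.2, p.1))^2 + 2 * ∑ j, (P j (p.2, p.1))^2) * Real.exp (-α * p.1) := rfl
    rw [h]
    exact ((continuousOn_const.mul (cU'.pow 2)).add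
      (continuousOn_const.mul (continuousOn_finset_sum _ fun j _ => (cP' j).pow 2))).mul
      cexp.continuousOn
  have hContΦ₂ : ContinuousOn (Function.uncurry Φ₂) {p : ℝ × (Fin (m+1) → ℝ) | p.1 < 0} := by
    have h : Function.uncurry Φ₂ = fun p : ℝ × (Fin (m+1) → ℝ) =>
        δ * (Tt (p.2, p.1) - ∑ j, Q j (p.2, p.1))^2 * Real.exp (-α * p.1) := rfl
    rw [h]
    exact ((continuousOn_const.mul
      ((cT'.sub (continuousOn_finset_sum _ fun j _ => cQ' j)).pow 2))).mul cexp.continuousOn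
  have hContΦ₃ : ContinuousOn (Function.uncurry Φ₃) {p : ℝ × (Fin (m+1) → ℝ) | p.1 < 0} := by
    have h : Function.uncurry Φ₃ = fun p : ℝ × (Fin (m+1) → ℝ) =>
        (2 * Real.exp (-α * p.1)) *
          (U (p.2, p.1) * (∑ j, Q j (p.2, p.1)) + ∑ j, (P j (p.2, p.1))^2) := rfl
    rw [h]
    exact (continuousOn_const.mul cexp.continuousOn).mul
      ((cU'.mul (continuousOn_finset_sum _ fun j _ => cQ' j)).add
        (continuousOn_finset_sum _ fun j _ => (cP' j).pow 2))
  have hContΦ₄ : ContinuousOn (Function.uncurry Φ₄) {p : ℝ × (Fin (m+1) → ℝ) | p.1 < 0} := by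
    have h : Function.uncurry Φ₄ = fun p : ℝ × (Fin (m+1) → ℝ) =>
        (2 * U (p.2, p.1) * Tt (p.2, p.1) - α * (U (p.2, p.1))^2) * Real.exp (-α * p.1) := rfl
    rw [h]
    exact (((continuousOn_const.mul cU').mul cT').sub
      (continuousOn_const.mul (cU'.pow 2))).mul cexp.continuousOn
  have hint1 : Integrable (Function.uncurry Φ₁) ((volume.restrict (Set.Ioc T₁ T₂)).prod ν) :=
    key_int Φ₁ hContΦ₁
  have hint2 : Integrable (Function.uncurry Φ₂) ((volume.restrict (Set.Ioc T₁ T₂)).prod ν) :=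
    key_int Φ₂ hContΦ₂
  have hint3 : Integrable (Function.uncurry Φ₃) ((volume.restrict (Set.Ioc T₁ T₂)).prod ν) :=
    key_int Φ₃ hContΦ₃
  have hint4 : Integrable (Function.uncurry Φ₄) ((volume.restrict (Set.Ioc T₁ T₂)).prod ν) :=
    key_int Φ₄ hContΦ₄
  -- pointwise inequality
  have h_pt : ∀ {t : ℝ}, t < 0 → ∀ x, Φ₁ t x ≤ Φ₂ t x + Φ₃ t x - Φ₄ t x := by
    intro t ht x
    have he := Real.exp_pos (-α * t)
    have key : δ * ((Φ₂ t x + Φ₃ t x - Φ₄ t x) - Φ₁ t x)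
        = Real.exp (-α * t) * (δ * (Tt (x, t) - ∑ j, Q j (x, t)) - U (x, t))^2 := by
      simp only [hΦ₁, hΦ₂, hΦ₃, hΦ₄, hdvg]
      field_simp
      ring
    nlinarith [mul_nonneg he.le (sq_nonneg (δ * (Tt (x, t) - ∑ j, Q j (x, t)) - U (x, t)))]
  -- rewriting the two statement integrals
  have hgrad : ∀ (x : Fin (m+1) → ℝ) {t : ℝ}, t < 0 →
      spatialGradSq u x t = ∑ j, (P j (x, t))^2 := by
    intro x t ht
    simp only [spatialGradSq]
    exact Finset.sum_congr rfl fun j _ => by rw [e₁ x ht j]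
  have hlap : ∀ (x : Fin (m+1) → ℝ) {t : ℝ}, t < 0 →
      spatialLaplacian u x t = ∑ j, Q j (x, t) := by
    intro x t ht
    simp only [spatialLaplacian]
    exact Finset.sum_congr rfl fun j _ => e₂ x ht j
  have hL : (∫ t in T₁..T₂, ∫ x in Set.Icc (0 : Fin (m+1) → ℝ) 1,
        ((α - δ⁻¹) * (u x t) ^ 2 + 2 * spatialGradSq u x t) * Real.exp (-α * t))
      = ∫ p : ℝ × (Fin (m+1) → ℝ), Φ₁ p.1 p.2 ∂((volume.restrict (Set.Ioc T₁ T₂)).prod ν) := by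
    rw [intervalIntegral.integral_of_le hT₁₂.le, ← MeasureTheory.integral_integral hint1]
    refine setIntegral_congr_fun measurableSet_Ioc (fun t ht => ?_)
    have ht0 : t < 0 := lt_of_le_of_lt ht.2 hT₂
    refine setIntegral_congr_fun measurableSet_Icc (fun x _ => ?_)
    rw [hgrad x ht0]
  have hR : (∫ t in T₁..T₂, ∫ x in Set.Icc (0 : Fin (m+1) → ℝ) 1,
        δ * (timeDeriv u x t - spatialLaplacian u x t) ^ 2 * Real.exp (-α * t))
      = ∫ p : ℝ × (Fin (m+1) → ℝ), Φ₂ p.1 p.2 ∂((volume.restrict (Set.Ioc T₁ T₂)).prod ν) := by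
    rw [intervalIntegral.integral_of_le hT₁₂.le, ← MeasureTheory.integral_integral hint2]
    refine setIntegral_congr_fun measurableSet_Ioc (fun t ht => ?_)
    have ht0 : t < 0 := lt_of_le_of_lt ht.2 hT₂
    refine setIntegral_congr_fun measurableSet_Icc (fun x _ => ?_)
    rw [e₃ x ht0, hlap x ht0]
  -- monotonicity
  have hmono : (∫ p : ℝ × (Fin (m+1) → ℝ), Φ₁ p.1 p.2 ∂((volume.restrict (Set.Ioc T₁ T₂)).prod ν))
      ≤ ∫ p : ℝ × (Fin (m+1) → ℝ), (Φ₂ p.1 p.2 + Φ₃ p.1 p.2 - Φ₄ p.1 p.2)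
          ∂((volume.restrict (Set.Ioc T₁ T₂)).prod ν) := by
    refine integral_mono_ae hint1 ((hint2.add hint3).sub hint4) ?_
    have hae : ∀ᵐ p ∂((volume.restrict (Set.Ioc T₁ T₂)).prod ν),
        p ∈ Set.Ioc T₁ T₂ ×ˢ Set.Icc (0 : Fin (m+1) → ℝ) 1 := by
      rw [hprod]
      exact ae_restrict_mem (measurableSet_Ioc.prod measurableSet_Icc)
    filter_upwards [hae] with p hp
    exact h_pt (lt_of_le_of_lt hp.1.2 hT₂) p.2
  have hsplit : (∫ p : ℝ × (Fin (m+1) → ℝ), (Φ₂ p.1 p.2 + Φ₃ p.1 p.2 - Φ₄ p.1 p.2)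
          ∂((volume.restrict (Set.Ioc T₁ T₂)).prod ν))
      = (∫ p : ℝ × (Fin (m+1) → ℝ), Φ₂ p.1 p.2 ∂((volume.restrict (Set.Ioc T₁ T₂)).prod ν))
        + (∫ p : ℝ × (Fin (m+1) → ℝ), Φ₃ p.1 p.2 ∂((volume.restrict (Set.Ioc T₁ T₂)).prod ν))
        - ∫ p : ℝ × (Fin (m+1) → ℝ), Φ₄ p.1 p.2 ∂((volume.restrict (Set.Ioc T₁ T₂)).prod ν) := by
    have h1 : (∫ p : ℝ × (Fin (m+1) → ℝ), (Φ₂ p.1 p.2 + Φ₃ p.1 p.2 - Φ₄ p.1 p.2)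
          ∂((volume.restrict (Set.Ioc T₁ T₂)).prod ν))
        = (∫ p : ℝ × (Fin (m+1) → ℝ), (Φ₂ p.1 p.2 + Φ₃ p.1 p.2)
            ∂((volume.restrict (Set.Ioc T₁ T₂)).prod ν))
          - ∫ p : ℝ × (Fin (m+1) → ℝ), Φ₄ p.1 p.2 ∂((volume.restrict (Set.Ioc T₁ T₂)).prod ν) :=
      integral_sub (hint2.add hint3) hint4
    have h2 : (∫ p : ℝ × (Fin (m+1) → ℝ), (Φ₂ p.1 p.2 + Φ₃ p.1 p.2)
          ∂((volume.restrict (Set.Ioc T₁ T₂)).prod ν))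
        = (∫ p : ℝ × (Fin (m+1) → ℝ), Φ₂ p.1 p.2 ∂((volume.restrict (Set.Ioc T₁ T₂)).prod ν))
          + ∫ p : ℝ × (Fin (m+1) → ℝ), Φ₃ p.1 p.2 ∂((volume.restrict (Set.Ioc T₁ T₂)).prod ν) :=
      integral_add hint2 hint3
    rw [h1, h2]
  -- the IBP term vanishes
  have h3 : (∫ p : ℝ × (Fin (m+1) → ℝ), Φ₃ p.1 p.2
      ∂((volume.restrict (Set.Ioc T₁ T₂)).prod ν)) = 0 := by
    rw [← MeasureTheory.integral_integral hint3]
    have hz : ∀ t ∈ Set.Ioc T₁ T₂, (∫ x, Φ₃ t x ∂ν) = 0 := by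
      intro t ht
      have ht0 : t < 0 := lt_of_le_of_lt ht.2 hT₂
      have h1 : (∫ x, Φ₃ t x ∂ν) = (2 * Real.exp (-α * t)) * ∫ x, dvg t x ∂ν := by
        simp only [hΦ₃]
        exact integral_const_mul _ _
      have h2 : (∫ x, dvg t x ∂ν) = 0 := by
        simp only [hdvg, hνdef]
        exact hIBP ht0
      rw [h1, h2, mul_zero]
    calc (∫ t in Set.Ioc T₁ T₂, ∫ x, Φ₃ t x ∂ν)
        = ∫ t in Set.Ioc T₁ T₂, (0:ℝ) := setIntegral_congr_fun measurableSet_Ioc hz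
      _ = 0 := by simp
  -- the time-derivative term via FTC
  have hT₁0 : T₁ < 0 := hT₁₂.trans hT₂
  have hint5 : ∀ {t : ℝ}, t < 0 →
      IntegrableOn (fun x => (u x t)^2 * Real.exp (-α * t)) (Set.Icc (0 : Fin (m+1) → ℝ) 1) := by
    intro t ht
    have hc : ContinuousOn (fun x : Fin (m+1) → ℝ => (u x t)^2 * Real.exp (-α * t))
        (Set.Icc (0 : Fin (m+1) → ℝ) 1) := by
      have hU' : ContinuousOn (fun x : Fin (m+1) → ℝ => U (x, t))
          (Set.Icc (0 : Fin (m+1) → ℝ) 1) :=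
        hcU.comp (hline t).continuousOn (hmapsto ht _)
      exact (hU'.pow 2).mul continuousOn_const
    exact hc.integrableOn_compact isCompact_Icc
  have h4 : (∫ p : ℝ × (Fin (m+1) → ℝ), Φ₄ p.1 p.2 ∂((volume.restrict (Set.Ioc T₁ T₂)).prod ν))
      = (∫ x in Set.Icc (0 : Fin (m+1) → ℝ) 1, (u x T₂)^2 * Real.exp (-α * T₂))
        - ∫ x in Set.Icc (0 : Fin (m+1) → ℝ) 1, (u x T₁)^2 * Real.exp (-α * T₁) := by
    rw [← MeasureTheory.integral_integral hint4, MeasureTheory.integral_integral_swap hint4]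
    have hFTCx : ∀ x : Fin (m+1) → ℝ, (∫ t in Set.Ioc T₁ T₂, Φ₄ t x)
        = (u x T₂)^2 * Real.exp (-α * T₂) - (u x T₁)^2 * Real.exp (-α * T₁) := by
      intro x
      rw [← intervalIntegral.integral_of_le hT₁₂.le]
      have hderiv : ∀ t ∈ Set.uIcc T₁ T₂,
          HasDerivAt (fun s => (U (x, s))^2 * Real.exp (-α * s)) (Φ₄ t x) t := by
        intro t ht
        rw [Set.uIcc_of_le hT₁₂.le] at ht
        have ht0 : t < 0 := lt_of_le_of_lt ht.2 hT₂
        simpa only [hΦ₄] using hgderiv x ht0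
      have hii : IntervalIntegrable (fun t => Φ₄ t x) volume T₁ T₂ := by
        apply ContinuousOn.intervalIntegrable
        have hlx : Continuous (fun s : ℝ => ((x, s) : (Fin (m+1) → ℝ) × ℝ)) :=
          continuous_const.prodMk continuous_id
        have hmt : Set.MapsTo (fun s : ℝ => ((x, s) : (Fin (m+1) → ℝ) × ℝ))
            (Set.uIcc T₁ T₂) Ω := by
          intro s hs
          rw [Set.uIcc_of_le hT₁₂.le] at hs
          exact hmem (lt_of_le_of_lt hs.2 hT₂)
        have c1 : ContinuousOn (fun s => U (x, s)) (Set.uIcc T₁ T₂) :=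
          hcU.comp hlx.continuousOn hmt
        have c2 : ContinuousOn (fun s => Tt (x, s)) (Set.uIcc T₁ T₂) :=
          hcT.comp hlx.continuousOn hmt
        have ce : Continuous (fun s : ℝ => Real.exp (-α * s)) :=
          Real.continuous_exp.comp (continuous_const.mul continuous_id)
        have hcont : ContinuousOn (fun t => Φ₄ t x) (Set.uIcc T₁ T₂) := by
          simp only [hΦ₄]
          exact (((continuousOn_const.mul c1).mul c2).sub
            (continuousOn_const.mul (c1.pow 2))).mul ce.continuousOn
        exact hcont
      exact intervalIntegral.integral_eq_sub_of_hasDerivAt hderiv hii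
    have hrw : (∫ x, ∫ t, Φ₄ t x ∂(volume.restrict (Set.Ioc T₁ T₂)) ∂ν)
        = ∫ x, ((u x T₂)^2 * Real.exp (-α * T₂) - (u x T₁)^2 * Real.exp (-α * T₁)) ∂ν := by
      congr 1
      funext x
      exact hFTCx x
    rw [hrw, hνdef]
    exact integral_sub (hint5 hT₂) (hint5 hT₁0)
  have hD : 0 ≤ ∫ x in Set.Icc (0 : Fin (m+1) → ℝ) 1, (u x T₂)^2 * Real.exp (-α * T₂) :=
    setIntegral_nonneg measurableSet_Icc (fun x _ => mul_nonneg (sq_nonneg _) (Real.exp_pos _).le)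
  rw [hL, hR]
  linarith [hmono, hsplit, h3, h4, hD]
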